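/- Let λ̄(β, m, Φ) = ((1−β)/β)·(∫₀^∞ max{mz−1, 0} dΦ(z))⁻¹ be the leverage threshold, where Φ satisfies Assumption 1. Then: (i) λ̄ is strictly decreasing in β ∈ (0,1); (ii) λ̄ is strictly decreasing in m > 0; (iii) if Φ₁ and Φ₂ both satisfy Assumption 1 and Φ₂ first-order stochastically dominates Φ₁ (i.e., 1 − Φ₁(z) ≤ 1 − Φ₂(z) for all z), then λ̄(β, m, Φ₁) ≥ λ̄(β, m, Φ₂); (iv) for the CES production function, m = A·α^{1/(1−ρ)} + 1 − δ if ρ < 1 and m = 1 − δ if ρ ≥ 1, so λ̄ is constant in ρ on [1,∞) and strictly decreasing in the elasticity of substitution 1/ρ for ρ ∈ (0,1). (Proposition 4: comparative statics of the leverage threshold.) -/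

import Mathlib

open Filter Topology MeasureTheory

/-- **Assumption 1.** `Φ` (the law `μ` of productivity) is an absolutely continuous
cdf on `[0,∞)` with `Φ(z) < 1` for all `z` and a finite mean. -/
structure Assumption1 (μ : Measure ℝ) : Prop where
  prob : IsProbabilityMeasure μ
  supp : μ (Set.Iio 0) = 0
  absCont : μ ≪ MeasureTheory.volume
  lt_one : ∀ z : ℝ, μ (Set.Iic z) < 1
  finite_mean : Integrable id μ

/-- The leverage threshold `λ̄ = ((1−β)/β)·(∫ max{mz−1, 0} dΦ(z))⁻¹`. -/
noncomputable def lamBar (β m : ℝ) (μ : Measure ℝ) : ℝ :=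
  ((1 - β) / β) * (∫ z, max (m * z - 1) 0 ∂μ)⁻¹

/-- CES production function `f(K,X)` (Cobb–Douglas when `ρ = 1`). -/
noncomputable def cesf (A a ρ : ℝ) (K X : ℝ) : ℝ :=
  if ρ = 1 then A * K ^ a * X ^ (1 - a)
  else A * (a * K ^ (1 - ρ) + (1 - a) * X ^ (1 - ρ)) ^ (1 / (1 - ρ))

/-- `F(K,X) = f(K,X) + (1−δ)K`. -/
noncomputable def cesF (A a ρ δ : ℝ) (K X : ℝ) : ℝ := cesf A a ρ K X + (1 - δ) * K

/-- Marginal product of capital `F_K(K,1)` for the CES production function. -/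
noncomputable def cesFK (A a ρ δ : ℝ) (K : ℝ) : ℝ := deriv (fun k => cesF A a ρ δ k 1) K

/-- The asymptotic marginal product of capital `m` for the CES production function:
`m = A·α^{1/(1−ρ)} + 1 − δ` if `ρ < 1` and `m = 1 − δ` if `ρ ≥ 1`. -/
noncomputable def cesM (A a δ ρ : ℝ) : ℝ :=
  if ρ < 1 then A * a ^ (1 / (1 - ρ)) + 1 - δ else 1 - δ

lemma measurable_g (m : ℝ) : Measurable (fun z : ℝ => max (m * z - 1) 0) :=
  (((measurable_const.mul measurable_id).sub measurable_const).max measurable_const)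

lemma integrable_g (μ : Measure ℝ) (hμ : Assumption1 μ) (m : ℝ) :
    Integrable (fun z => max (m * z - 1) 0) μ := by
  haveI := hμ.prob
  have hb : Integrable (fun z : ℝ => |m| * |z| + 1) μ :=
    (hμ.finite_mean.abs.const_mul |m|).add (integrable_const 1)
  refine hb.mono' (measurable_g m).aestronglyMeasurable ?_
  filter_upwards with z
  calc ‖max (m * z - 1) 0‖ = max (m * z - 1) 0 := Real.norm_of_nonneg (le_max_right _ _)
    _ ≤ |m * z - 1| := max_le (le_abs_self _) (abs_nonneg _)
    _ ≤ |m * z| + |(1:ℝ)| := abs_sub _ _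
    _ = |m| * |z| + 1 := by rw [abs_mul, abs_one]

lemma measure_Ioi_pos (μ : Measure ℝ) (hμ : Assumption1 μ) (c : ℝ) : 0 < μ (Set.Ioi c) := by
  haveI := hμ.prob
  rcases (zero_le : 0 ≤ μ (Set.Ioi c)).lt_or_eq with h | h
  · exact h
  · exfalso
    have h1 : μ Set.univ ≤ μ (Set.Iic c) + μ (Set.Ioi c) := by
      rw [← Set.Iic_union_Ioi (a := c)]; exact measure_union_le _ _
    rw [measure_univ, ← h, add_zero] at h1
    exact absurd h1 (not_le.mpr (hμ.lt_one c))

lemma integral_g_pos (μ : Measure ℝ) (hμ : Assumption1 μ) {m : ℝ} (hm : 0 < m) :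
    0 < ∫ z, max (m * z - 1) 0 ∂μ := by
  refine (integral_pos_iff_support_of_nonneg_ae
    (Filter.Eventually.of_forall fun z => le_max_right _ _) (integrable_g μ hμ m)).mpr ?_
  refine lt_of_lt_of_le (measure_Ioi_pos μ hμ (1/m)) (measure_mono ?_)
  intro z hz
  have hz' : 1 / m < z := hz
  have : 1 < m * z := by rw [div_lt_iff₀ hm] at hz'; linarith
  simp only [Function.mem_support, ne_eq]
  have : 0 < max (m * z - 1) 0 := lt_max_of_lt_left (by linarith)
  exact ne_of_gt this

lemma integral_g_lt (μ : Measure ℝ) (hμ : Assumption1 μ) {m₁ m₂ : ℝ}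
    (h0 : 0 < m₁) (h : m₁ < m₂) :
    ∫ z, max (m₁ * z - 1) 0 ∂μ < ∫ z, max (m₂ * z - 1) 0 ∂μ := by
  rw [← sub_pos, ← integral_sub (integrable_g μ hμ m₂) (integrable_g μ hμ m₁)]
  have hnn : ∀ z : ℝ, 0 ≤ max (m₂ * z - 1) 0 - max (m₁ * z - 1) 0 := by
    intro z
    rcases le_or_gt 0 z with hz | hz
    · have : m₁ * z ≤ m₂ * z := mul_le_mul_of_nonneg_right h.le hz
      have := max_le_max (sub_le_sub_right this 1) (le_refl (0:ℝ))
      linarith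
    · rw [max_eq_right (by nlinarith : m₁ * z - 1 ≤ 0),
        max_eq_right (by nlinarith : m₂ * z - 1 ≤ 0)]
      norm_num
  refine (integral_pos_iff_support_of_nonneg_ae (Filter.Eventually.of_forall hnn) ?_).mpr ?_
  · exact (integrable_g μ hμ m₂).sub (integrable_g μ hμ m₁)
  refine lt_of_lt_of_le (measure_Ioi_pos μ hμ (1/m₁)) (measure_mono ?_)
  intro z hz
  have hz' : 1 / m₁ < z := hz
  have h1 : 1 < m₁ * z := by rw [div_lt_iff₀ h0] at hz'; linarith
  have hzpos : 0 < z := lt_trans (by positivity) hz'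
  have h2 : m₁ * z < m₂ * z := mul_lt_mul_of_pos_right h hzpos
  simp only [Function.mem_support, ne_eq]
  rw [max_eq_left (by linarith), max_eq_left (by linarith)]
  intro hc
  nlinarith
lemma lamBar_lt_lamBar (μ : Measure ℝ) (hμ : Assumption1 μ) {β : ℝ}
    (hβ : β ∈ Set.Ioo (0:ℝ) 1) {m₁ m₂ : ℝ} (h0 : 0 < m₁) (h : m₁ < m₂) :
    lamBar β m₂ μ < lamBar β m₁ μ := by
  unfold lamBar
  have hk : 0 < (1 - β) / β := div_pos (by linarith [hβ.2]) hβ.1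
  exact mul_lt_mul_of_pos_left
    ((inv_lt_inv₀ (lt_trans (integral_g_pos μ hμ h0) (integral_g_lt μ hμ h0 h))
      (integral_g_pos μ hμ h0)).mpr (integral_g_lt μ hμ h0 h)) hk

lemma lintegral_g_fosd (μ₁ μ₂ : Measure ℝ) (h₁ : Assumption1 μ₁) (h₂ : Assumption1 μ₂)
    (hd : ∀ z : ℝ, μ₁ (Set.Ioi z) ≤ μ₂ (Set.Ioi z)) {m : ℝ} (hm : 0 < m) :
    ∫ z, max (m * z - 1) 0 ∂μ₁ ≤ ∫ z, max (m * z - 1) 0 ∂μ₂ := by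
  haveI := h₁.prob; haveI := h₂.prob
  have hnn : ∀ z : ℝ, 0 ≤ max (m * z - 1) 0 := fun z => le_max_right _ _
  rw [integral_eq_lintegral_of_nonneg_ae (Filter.Eventually.of_forall hnn)
      (measurable_g m).aestronglyMeasurable,
    integral_eq_lintegral_of_nonneg_ae (Filter.Eventually.of_forall hnn)
      (measurable_g m).aestronglyMeasurable]
  have hfin : ∀ (μ : Measure ℝ), Assumption1 μ →
      ∫⁻ z, ENNReal.ofReal (max (m * z - 1) 0) ∂μ ≠ ⊤ := by
    intro μ hμ
    have := (integrable_g μ hμ m).hasFiniteIntegral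
    rw [HasFiniteIntegral] at this
    refine ne_of_lt (lt_of_le_of_lt (lintegral_mono fun z => ?_) this)
    rw [← ofReal_norm_eq_enorm, Real.norm_of_nonneg (hnn z)]
  refine ENNReal.toReal_le_toReal (hfin μ₁ h₁) (hfin μ₂ h₂) |>.mpr ?_
  rw [lintegral_eq_lintegral_meas_lt μ₁ (Filter.Eventually.of_forall hnn)
      (measurable_g m).aemeasurable,
    lintegral_eq_lintegral_meas_lt μ₂ (Filter.Eventually.of_forall hnn)
      (measurable_g m).aemeasurable]
  refine lintegral_mono fun t => ?_
  rcases lt_or_ge t 0 with ht | ht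
  · have he : {a : ℝ | t < max (m * a - 1) 0} = Set.univ := by
      ext a; simp only [Set.mem_setOf_eq, Set.mem_univ, iff_true]
      exact lt_of_lt_of_le ht (hnn a)
    rw [he, measure_univ, measure_univ]
  · have he : {a : ℝ | t < max (m * a - 1) 0} = Set.Ioi ((t + 1) / m) := by
      ext a
      simp only [Set.mem_setOf_eq, Set.mem_Ioi]
      constructor
      · intro h
        have : t < m * a - 1 := by
          rcases max_cases (m * a - 1) 0 with ⟨he, _⟩ | ⟨he, _⟩
          · rwa [he] at h
          · rw [he] at h; linarith
        rw [div_lt_iff₀ hm]; linarith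
      · intro h
        rw [div_lt_iff₀ hm] at h
        exact lt_max_of_lt_left (by linarith)
    rw [he]
    exact hd _

lemma lamBar_fosd (μ₁ μ₂ : Measure ℝ) (h₁ : Assumption1 μ₁) (h₂ : Assumption1 μ₂)
    (hd : ∀ z : ℝ, μ₁ (Set.Ioi z) ≤ μ₂ (Set.Ioi z)) {β : ℝ} (hβ : β ∈ Set.Ioo (0:ℝ) 1)
    {m : ℝ} (hm : 0 < m) : lamBar β m μ₂ ≤ lamBar β m μ₁ := by
  unfold lamBar
  have hk : 0 ≤ (1 - β) / β := le_of_lt (div_pos (by linarith [hβ.2]) hβ.1)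
  exact mul_le_mul_of_nonneg_left
    ((inv_le_inv₀ (lt_of_lt_of_le (integral_g_pos μ₁ h₁ hm) (lintegral_g_fosd μ₁ μ₂ h₁ h₂ hd hm))
      (integral_g_pos μ₁ h₁ hm)).mpr (lintegral_g_fosd μ₁ μ₂ h₁ h₂ hd hm)) hk


lemma cesFK_eq (A δ : ℝ) {a ρ : ℝ} (ha : a ∈ Set.Ioo (0:ℝ) 1) {K : ℝ} (hK : 0 < K) :
    cesFK A a ρ δ K = (if ρ = 1 then A * (a * K ^ (a - 1))
      else A * a * K ^ (-ρ) * (a * K ^ (1 - ρ) + (1 - a)) ^ (ρ / (1 - ρ))) + (1 - δ) := by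
  unfold cesFK cesF cesf
  by_cases hρ : ρ = 1
  · simp only [hρ, if_true, eq_self_iff_true, Real.one_rpow, mul_one]
    have hd : HasDerivAt (fun k : ℝ => A * k ^ a + (1 - δ) * k)
        (A * (a * K ^ (a - 1)) + (1 - δ) * 1) K :=
      ((Real.hasDerivAt_rpow_const (p := a) (Or.inl hK.ne')).const_mul A).add
        ((hasDerivAt_id' (x := K)).const_mul (1 - δ))
    rw [hd.deriv]; ring
  · simp only [if_neg hρ, Real.one_rpow, mul_one]
    have hs : (1:ℝ) - ρ ≠ 0 := fun h => hρ (by linarith)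
    have hKs : 0 < K ^ (1 - ρ) := Real.rpow_pos_of_pos hK _
    have hinner : 0 < a * K ^ (1 - ρ) + (1 - a) := by nlinarith [ha.1, ha.2]
    have h1 : HasDerivAt (fun k : ℝ => a * k ^ (1 - ρ) + (1 - a))
        (a * ((1 - ρ) * K ^ (1 - ρ - 1))) K :=
      ((Real.hasDerivAt_rpow_const (p := 1 - ρ) (Or.inl hK.ne')).const_mul a).add_const _
    have h3 := h1.rpow_const (p := 1 / (1 - ρ)) (Or.inl hinner.ne')
    have hd := (h3.const_mul A).add ((hasDerivAt_id' (x := K)).const_mul (1 - δ))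
    rw [show (fun k : ℝ => A * (a * k ^ (1 - ρ) + (1 - a)) ^ (1 / (1 - ρ)) + (1 - δ) * k) = ((fun y => A * (a * y ^ (1 - ρ) + (1 - a)) ^ (1 / (1 - ρ))) + fun y => (1 - δ) * y) from rfl, hd.deriv]
    have e1 : (1:ℝ) / (1 - ρ) - 1 = ρ / (1 - ρ) := by field_simp; ring
    have e2 : (1:ℝ) - ρ - 1 = -ρ := by ring
    rw [e1, e2]
    field_simp

lemma cesFK_tendsto (A δ : ℝ) {a ρ : ℝ} (ha : a ∈ Set.Ioo (0:ℝ) 1) (hρ : 0 < ρ) :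
    Tendsto (fun K => cesFK A a ρ δ K) atTop (𝓝 (cesM A a δ ρ)) := by
  have hev : ∀ᶠ K in atTop, (if ρ = 1 then A * (a * K ^ (a - 1))
      else A * a * K ^ (-ρ) * (a * K ^ (1 - ρ) + (1 - a)) ^ (ρ / (1 - ρ))) + (1 - δ)
      = cesFK A a ρ δ K := by
    filter_upwards [eventually_gt_atTop (0:ℝ)] with K hK
    exact (cesFK_eq A δ ha hK).symm
  refine Tendsto.congr' hev ?_
  rcases lt_trichotomy ρ 1 with hρ1 | hρ1 | hρ1
  · -- ρ < 1
    have hρne : ρ ≠ 1 := ne_of_lt hρ1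
    have hs : (1:ℝ) - ρ ≠ 0 := by intro h; exact hρne (by linarith)
    simp only [if_neg hρne]
    have hev2 : ∀ᶠ K in atTop,
        A * a * (a + (1 - a) * K ^ (ρ - 1)) ^ (ρ / (1 - ρ)) + (1 - δ)
        = A * a * K ^ (-ρ) * (a * K ^ (1 - ρ) + (1 - a)) ^ (ρ / (1 - ρ)) + (1 - δ) := by
      filter_upwards [eventually_gt_atTop (0:ℝ)] with K hK
      have h0 : K ^ (1 - ρ) * K ^ (ρ - 1) = 1 := by
        rw [← Real.rpow_add hK]; norm_num
      have hfact : a * K ^ (1 - ρ) + (1 - a) = K ^ (1 - ρ) * (a + (1 - a) * K ^ (ρ - 1)) := by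
        linear_combination (a - 1) * h0
      have hP : (0:ℝ) ≤ a + (1 - a) * K ^ (ρ - 1) := by
        have := Real.rpow_pos_of_pos hK (ρ - 1); nlinarith [ha.1, ha.2]
      have hKe : (K ^ (1 - ρ)) ^ (ρ / (1 - ρ)) = K ^ ρ := by
        rw [← Real.rpow_mul hK.le]; congr 1; field_simp
      have hKne : K ^ (-ρ) * K ^ ρ = 1 := by rw [← Real.rpow_add hK]; norm_num
      rw [hfact, Real.mul_rpow (Real.rpow_pos_of_pos hK _).le hP, hKe]
      linear_combination (-(A * a * (a + (1 - a) * K ^ (ρ - 1)) ^ (ρ / (1 - ρ)))) * hKne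
    refine Tendsto.congr' hev2 ?_
    have h1 : Tendsto (fun K : ℝ => K ^ (ρ - 1)) atTop (𝓝 0) := by
      have := tendsto_rpow_neg_atTop (y := 1 - ρ) (by linarith)
      simpa [neg_sub] using this
    have h2 : Tendsto (fun K : ℝ => a + (1 - a) * K ^ (ρ - 1)) atTop (𝓝 (a + (1 - a) * 0)) :=
      (h1.const_mul _).const_add a
    have h3 := h2.rpow_const (p := ρ / (1 - ρ)) (Or.inl (by simpa using ha.1.ne'))
    have h4 := (h3.const_mul (A * a)).add_const (1 - δ)
    have hval : cesM A a δ ρ = A * a * (a + (1 - a) * 0) ^ (ρ / (1 - ρ)) + (1 - δ) := by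
      simp only [mul_zero, add_zero]
      have e : (1:ℝ) / (1 - ρ) = 1 + ρ / (1 - ρ) := by field_simp; ring
      rw [cesM, if_pos hρ1, e, Real.rpow_add ha.1, Real.rpow_one]; ring
    rw [hval]; exact h4
  · -- ρ = 1
    simp only [hρ1, if_true, eq_self_iff_true]
    have h1 : Tendsto (fun K : ℝ => K ^ (a - 1)) atTop (𝓝 0) := by
      have := tendsto_rpow_neg_atTop (y := 1 - a) (by linarith [ha.2])
      simpa [neg_sub] using this
    have h4 := (((h1.const_mul a).const_mul A)).add_const (1 - δ)
    have hval : cesM A a δ 1 = A * (a * 0) + (1 - δ) := by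
      rw [cesM, if_neg (lt_irrefl 1)]; ring
    rw [hval]; exact h4
  · -- ρ > 1
    simp only [if_neg hρ1.ne']
    have hKneg : Tendsto (fun K : ℝ => K ^ (-ρ)) atTop (𝓝 0) := tendsto_rpow_neg_atTop hρ
    have hK1ρ : Tendsto (fun K : ℝ => K ^ (1 - ρ)) atTop (𝓝 0) := by
      have := tendsto_rpow_neg_atTop (y := ρ - 1) (by linarith)
      simpa [neg_sub] using this
    have h2 : Tendsto (fun K : ℝ => a * K ^ (1 - ρ) + (1 - a)) atTop (𝓝 (a * 0 + (1 - a))) :=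
      (hK1ρ.const_mul a).add_const _
    have h3 := h2.rpow_const (p := ρ / (1 - ρ))
      (Or.inl (by simp only [mul_zero, zero_add]; linarith [ha.2]))
    have h4 := ((hKneg.const_mul (A * a)).mul h3).add_const (1 - δ)
    have hval : cesM A a δ ρ = A * a * 0 * (a * 0 + (1 - a)) ^ (ρ / (1 - ρ)) + (1 - δ) := by
      rw [cesM, if_neg (not_lt.mpr hρ1.le)]; ring
    rw [hval]; exact h4

/-- **Proposition 4 (comparative statics of the leverage threshold).**
(i) `λ̄` is strictly decreasing in `β`; (ii) strictly decreasing in `m`;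
(iii) decreasing with respect to first-order stochastic dominance of `Φ`;
(iv) for the CES production function, `m = A·α^{1/(1−ρ)} + 1 − δ` if `ρ < 1` and
`m = 1 − δ` if `ρ ≥ 1`, so `λ̄` is constant in `ρ` on `[1,∞)` and strictly decreasing
in the elasticity of substitution `1/ρ` for `ρ ∈ (0,1)`. -/
theorem comparative_statics_leverage_threshold
    (μ : Measure ℝ) (hμ : Assumption1 μ) :
    (∀ m : ℝ, 0 < m → StrictAntiOn (fun β => lamBar β m μ) (Set.Ioo (0 : ℝ) 1)) ∧
    (∀ β : ℝ, β ∈ Set.Ioo (0 : ℝ) 1 → StrictAntiOn (fun m => lamBar β m μ) (Set.Ioi (0 : ℝ))) ∧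
    (∀ μ₁ μ₂ : Measure ℝ, Assumption1 μ₁ → Assumption1 μ₂ →
      (∀ z : ℝ, μ₁ (Set.Ioi z) ≤ μ₂ (Set.Ioi z)) →
      ∀ β : ℝ, β ∈ Set.Ioo (0 : ℝ) 1 → ∀ m : ℝ, 0 < m →
        lamBar β m μ₂ ≤ lamBar β m μ₁) ∧
    (∀ A a δ : ℝ, 0 < A → a ∈ Set.Ioo (0 : ℝ) 1 → δ ∈ Set.Ioo (0 : ℝ) 1 →
      (∀ ρ : ℝ, 0 < ρ →
        Tendsto (fun K => cesFK A a ρ δ K) atTop (𝓝 (cesM A a δ ρ))) ∧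
      (∀ β : ℝ, β ∈ Set.Ioo (0 : ℝ) 1 →
        (∀ ρ₁ ρ₂ : ℝ, 1 ≤ ρ₁ → 1 ≤ ρ₂ →
          lamBar β (cesM A a δ ρ₁) μ = lamBar β (cesM A a δ ρ₂) μ) ∧
        (∀ ρ₁ ρ₂ : ℝ, 0 < ρ₁ → ρ₁ < ρ₂ → ρ₂ < 1 →
          lamBar β (cesM A a δ ρ₁) μ < lamBar β (cesM A a δ ρ₂) μ))) := by

  refine ⟨?_, ?_, ?_, ?_⟩
  · -- (i)
    intro m hm β₁ hβ₁ β₂ hβ₂ hlt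
    have hc : 0 < (∫ z, max (m * z - 1) 0 ∂μ)⁻¹ := inv_pos.mpr (integral_g_pos μ hμ hm)
    have hfrac : (1 - β₂) / β₂ < (1 - β₁) / β₁ := by
      rw [div_lt_div_iff₀ hβ₂.1 hβ₁.1]; nlinarith [hβ₁.1, hβ₂.1]
    exact mul_lt_mul_of_pos_right hfrac hc
  · -- (ii)
    intro β hβ m₁ hm₁ m₂ hm₂ hlt
    exact lamBar_lt_lamBar μ hμ hβ hm₁ hlt
  · -- (iii)
    intro μ₁ μ₂ h₁ h₂ hd β hβ m hm
    exact lamBar_fosd μ₁ μ₂ h₁ h₂ hd hβ hm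
  · -- (iv)
    intro A a δ hA ha hδ
    refine ⟨fun ρ hρ => cesFK_tendsto A δ ha hρ, fun β hβ => ⟨?_, ?_⟩⟩
    · intro ρ₁ ρ₂ h1 h2
      have e1 : cesM A a δ ρ₁ = 1 - δ := by rw [cesM, if_neg (not_lt.mpr h1)]
      have e2 : cesM A a δ ρ₂ = 1 - δ := by rw [cesM, if_neg (not_lt.mpr h2)]
      rw [e1, e2]
    · intro ρ₁ ρ₂ h1 h12 h21
      have h11 : ρ₁ < 1 := lt_trans h12 h21
      have e1 : cesM A a δ ρ₁ = A * a ^ (1 / (1 - ρ₁)) + 1 - δ := by rw [cesM, if_pos h11]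
      have e2 : cesM A a δ ρ₂ = A * a ^ (1 / (1 - ρ₂)) + 1 - δ := by rw [cesM, if_pos h21]
      have hpos2 : 0 < cesM A a δ ρ₂ := by
        rw [e2]
        have := Real.rpow_pos_of_pos ha.1 (1 / (1 - ρ₂))
        nlinarith [hδ.2, hA]
      have hexp : 1 / (1 - ρ₁) < 1 / (1 - ρ₂) :=
        one_div_lt_one_div_of_lt (by linarith) (by linarith)
      have hlt : cesM A a δ ρ₂ < cesM A a δ ρ₁ := by
        rw [e1, e2]
        have := Real.rpow_lt_rpow_of_exponent_gt ha.1 ha.2 hexp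
        nlinarith [hA]
      exact lamBar_lt_lamBar μ hμ hβ hpos2 hlt
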